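/- (Regular values are uniquely v-representable.) Let ρ ∈ V* be pure-state v-representable, i.e., there exist v ∈ V and a pure ground state Γ of ι(v)+W with ι*(Γ) = ρ. Suppose ρ satisfies the following regularity condition: for every unit vector Ψ with ι*(|Ψ⟩⟨Ψ|) = ρ, the real-linear map from { φ ∈ H : ⟨φ, Ψ⟩ = 0 } to V* sending φ to the functional v ↦ 2 Re⟨φ, ι(v)Ψ⟩ has image equal to the direction space of the affine span of ι*(P). Then ρ is uniquely v-representable: for any v, v' ∈ V such that ρ is the density of some pure ground state of ι(v)+W and of some pure ground state of ι(v')+W, the operator ι(v) − ι(v') is a real scalar multiple of the identity. -/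

import Mathlib

open Filter Topology

noncomputable section

variable {V H : Type*}
  [AddCommGroup V] [Module ℝ V]
  [NormedAddCommGroup H] [InnerProductSpace ℂ H]

/-- The real expectation value `⟨ψ, T ψ⟩` of an operator `T` in the vector `ψ`. -/
def expectation (T : H →ₗ[ℂ] H) (ψ : H) : ℝ := (inner ℂ ψ (T ψ) : ℂ).re

/-- The ground state energy of the Hamiltonian `ι v + W`. -/
def energy (ι : V →ₗ[ℝ] (H →ₗ[ℂ] H)) (W : H →ₗ[ℂ] H) (v : V) : ℝ :=
  sInf {r : ℝ | ∃ ψ : H, ‖ψ‖ = 1 ∧ r = expectation (ι v + W) ψ}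

/-- The density `ι*(|ψ⟩⟨ψ|)` of the pure state given by the unit vector `ψ`,
as an element of the dual space `V*`. -/
def pureDensity (ι : V →ₗ[ℝ] (H →ₗ[ℂ] H)) (ψ : H) : Module.Dual ℝ V where
  toFun v := expectation (ι v) ψ
  map_add' v w := by simp [expectation, inner_add_right]
  map_smul' c v := by
    simp only [map_smul, LinearMap.smul_apply, expectation, RingHom.id_apply, smul_eq_mul]
    rw [← algebraMap_smul ℂ c ((ι v) ψ), Complex.coe_algebraMap, inner_smul_right]
    simp

/-- An ensemble state: a positive semidefinite operator of unit trace. -/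
def IsEnsembleState (Γ : H →ₗ[ℂ] H) : Prop :=
  Γ.IsSymmetric ∧ (∀ x : H, 0 ≤ (inner ℂ x (Γ x) : ℂ).re) ∧ LinearMap.trace ℂ H Γ = 1

/-- The density `ι*(Γ)` of a state `Γ`, `v ↦ Tr(Γ ι(v))`, as an element of `V*`. -/
def traceDensity (ι : V →ₗ[ℝ] (H →ₗ[ℂ] H)) (Γ : H →ₗ[ℂ] H) : Module.Dual ℝ V where
  toFun v := (LinearMap.trace ℂ H (ι v ∘ₗ Γ)).re
  map_add' v w := by simp [map_add, LinearMap.add_comp]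
  map_smul' c v := by
    simp only [map_smul, RingHom.id_apply, smul_eq_mul]
    rw [← algebraMap_smul ℂ c (ι v), LinearMap.smul_comp, map_smul, Complex.coe_algebraMap]
    simp

/-- The pure (Levy–Lieb) universal functional `F_p`. -/
def Fp (ι : V →ₗ[ℝ] (H →ₗ[ℂ] H)) (W : H →ₗ[ℂ] H) (ρ : Module.Dual ℝ V) : ℝ :=
  sInf {r : ℝ | ∃ ψ : H, ‖ψ‖ = 1 ∧ pureDensity ι ψ = ρ ∧ r = expectation W ψ}

/-- The ensemble (Lieb/Valone) universal functional `F_e`. -/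
def Fe (ι : V →ₗ[ℝ] (H →ₗ[ℂ] H)) (W : H →ₗ[ℂ] H) (ρ : Module.Dual ℝ V) : ℝ :=
  sInf {r : ℝ | ∃ Γ : H →ₗ[ℂ] H, IsEnsembleState Γ ∧ traceDensity ι Γ = ρ ∧
    r = (LinearMap.trace ℂ H (W ∘ₗ Γ)).re}

/-- The weight space of a functional `α ∈ V*`. -/
def weightSpace (ι : V →ₗ[ℝ] (H →ₗ[ℂ] H)) (α : Module.Dual ℝ V) : Submodule ℂ H where
  carrier := {ψ : H | ∀ v : V, ι v ψ = (α v : ℂ) • ψ}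
  add_mem' := by
    intro a b ha hb v
    rw [map_add, ha v, hb v, smul_add]
  zero_mem' := by intro v; simp
  smul_mem' := by
    intro c x hx v
    rw [LinearMap.map_smul, hx v, smul_comm]

/-- The set of weights of an abelian functional theory. -/
def weights (ι : V →ₗ[ℝ] (H →ₗ[ℂ] H)) : Set (Module.Dual ℝ V) :=
  {α : Module.Dual ℝ V | weightSpace ι α ≠ ⊥}

/-- The derivative of the density map along the set of pure states at `|Ψ⟩⟨Ψ|`,
applied to the tangent vector `φ ⊥ Ψ`: the functional `v ↦ 2 Re⟨φ, ι(v)Ψ⟩`. -/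
def derivDensity (ι : V →ₗ[ℝ] (H →ₗ[ℂ] H)) (Ψ φ : H) : Module.Dual ℝ V where
  toFun v := 2 * (inner ℂ φ (ι v Ψ) : ℂ).re
  map_add' v w := by simp [inner_add_right]; ring
  map_smul' c v := by
    simp only [map_smul, LinearMap.smul_apply, RingHom.id_apply, smul_eq_mul]
    rw [← algebraMap_smul ℂ c ((ι v) Ψ), Complex.coe_algebraMap, inner_smul_right]
    simp; ring

/-- `ρ` is a relative interior point of the convex set `C` (i.e. an interior point
of `C` within its affine span): every point of `C` lies on a segment inside `C`
having `ρ` in its (open) interior. -/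
def IsRelInterior {M : Type*} [AddCommGroup M] [Module ℝ M] (C : Set M) (ρ : M) : Prop :=
  ρ ∈ C ∧ ∀ σ ∈ C, ∃ τ ∈ C, ∃ t : ℝ, 0 < t ∧ t < 1 ∧ ρ = t • σ + (1 - t) • τ

/-- Strong orthogonality: componentwise orthogonality in every weight space. -/
def StronglyOrthogonal [FiniteDimensional ℂ H] (ι : V →ₗ[ℝ] (H →ₗ[ℂ] H)) (Φ Φ' : H) : Prop :=
  ∀ α : Module.Dual ℝ V, weightSpace ι α ≠ ⊥ →
    (inner ℂ (Submodule.orthogonalProjectionOnto (weightSpace ι α) Φ)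
        (Submodule.orthogonalProjectionOnto (weightSpace ι α) Φ') : ℂ) = 0

/-- The `k`-convex hull of a set. -/
def convk {M : Type*} [AddCommGroup M] [Module ℝ M] (k : ℕ) (X : Set M) : Set M :=
  {ρ : M | ∃ (t : Fin k → ℝ) (x : Fin k → M),
    (∀ i, 0 ≤ t i) ∧ (∑ i, t i) = 1 ∧ (∀ i, x i ∈ X) ∧ (∑ i, t i • x i) = ρ}

/-- The operator `A ⊗ id` on `H ⊗ ℂᵏ ≅ H ⊕ ⋯ ⊕ H` (k summands). -/
def opBar (k : ℕ) (A : H →ₗ[ℂ] H) :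
    (PiLp 2 fun _ : Fin k => H) →ₗ[ℂ] (PiLp 2 fun _ : Fin k => H) where
  toFun x := WithLp.toLp 2 (fun i => A (x i))
  map_add' x y := by ext i; simp [PiLp.add_apply]
  map_smul' c x := by ext i; simp [PiLp.smul_apply]

/-- The potential map `v ↦ ι(v) ⊗ id` of the `k`-convexified functional theory. -/
def potBar (k : ℕ) (ι : V →ₗ[ℝ] (H →ₗ[ℂ] H)) :
    V →ₗ[ℝ] ((PiLp 2 fun _ : Fin k => H) →ₗ[ℂ] (PiLp 2 fun _ : Fin k => H)) where
  toFun v := opBar k (ι v)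
  map_add' v w := by
    apply LinearMap.ext; intro x; ext i
    simp [opBar, map_add]
  map_smul' c v := by
    apply LinearMap.ext; intro x; ext i
    simp [opBar, map_smul]

/-- The subspace of potentials mapped to real multiples of the identity operator. -/
def scalarPart (ι : V →ₗ[ℝ] (H →ₗ[ℂ] H)) : Submodule ℝ V where
  carrier := {v : V | ∃ c : ℝ, ι v = c • (LinearMap.id : H →ₗ[ℂ] H)}
  add_mem' := by
    rintro a b ⟨c, hc⟩ ⟨d, hd⟩
    exact ⟨c + d, by rw [map_add, hc, hd, add_smul]⟩
  zero_mem' := ⟨0, by simp⟩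
  smul_mem' := by
    rintro a v ⟨c, hc⟩
    exact ⟨a * c, by rw [map_smul, hc, smul_smul]⟩


section Aux

set_option linter.unusedSectionVars false

lemma expectation_add (T S : H →ₗ[ℂ] H) (x : H) :
    expectation (T + S) x = expectation T x + expectation S x := by
  simp [expectation, inner_add_right]

lemma energy_bddBelow [FiniteDimensional ℂ H] (ι : V →ₗ[ℝ] (H →ₗ[ℂ] H)) (W : H →ₗ[ℂ] H)
    (v : V) : BddBelow {r : ℝ | ∃ ψ : H, ‖ψ‖ = 1 ∧ r = expectation (ι v + W) ψ} := by
  set T := LinearMap.toContinuousLinearMap (ι v + W) with hT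
  refine ⟨-‖T‖, ?_⟩
  rintro r ⟨ψ, hψ, rfl⟩
  have h1 : ‖(inner ℂ ψ ((ι v + W) ψ) : ℂ)‖ ≤ ‖T‖ := by
    calc ‖(inner ℂ ψ ((ι v + W) ψ) : ℂ)‖ ≤ ‖ψ‖ * ‖(ι v + W) ψ‖ := norm_inner_le_norm _ _
    _ = ‖T ψ‖ := by
        rw [hψ, one_mul]; rfl
    _ ≤ ‖T‖ * ‖ψ‖ := T.le_opNorm ψ
    _ = ‖T‖ := by rw [hψ, mul_one]
  have h2 : |(inner ℂ ψ ((ι v + W) ψ) : ℂ).re| ≤ ‖(inner ℂ ψ ((ι v + W) ψ) : ℂ)‖ :=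
    Complex.abs_re_le_norm _
  have := neg_abs_le (inner ℂ ψ ((ι v + W) ψ) : ℂ).re
  simp only [expectation]
  linarith

lemma energy_le [FiniteDimensional ℂ H] (ι : V →ₗ[ℝ] (H →ₗ[ℂ] H)) (W : H →ₗ[ℂ] H)
    (v : V) {x : H} (hx : ‖x‖ = 1) : energy ι W v ≤ expectation (ι v + W) x :=
  csInf_le (energy_bddBelow ι W v) ⟨x, hx, rfl⟩

/-- A minimizer of the expectation over the unit sphere is an eigenvector with real
eigenvalue. -/
lemma eigen_of_min [FiniteDimensional ℂ H] {T : H →ₗ[ℂ] H} (hT : T.IsSymmetric)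
    {x : H} (hx : ‖x‖ = 1)
    (hmin : ∀ y : H, ‖y‖ = 1 → expectation T x ≤ expectation T y) :
    ∃ c : ℝ, T x = (c : ℂ) • x := by
  set Tc := LinearMap.toContinuousLinearMap T with hTc
  have hcoe : (Tc : H →ₗ[ℂ] H) = T := rfl
  have hsa : IsSelfAdjoint Tc := by
    rw [ContinuousLinearMap.isSelfAdjoint_iff_isSymmetric, hcoe]; exact hT
  have hre : ∀ y : H, Tc.reApplyInnerSelf y = expectation T y := by
    intro y
    rw [ContinuousLinearMap.reApplyInnerSelf_apply]
    have : (inner ℂ (Tc y) y : ℂ) = inner ℂ y (T y) := hT y y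
    simp only [expectation]
    rw [this]
    rfl
  have hx0 : x ≠ 0 := by
    intro h; rw [h, norm_zero] at hx; exact one_ne_zero hx.symm
  have hmin' : IsMinOn Tc.reApplyInnerSelf (Metric.sphere (0 : H) ‖x‖) x := by
    intro y hy
    have hy1 : ‖y‖ = 1 := by
      have := Metric.mem_sphere.mp hy
      rwa [dist_zero_right, hx] at this
    simp only [Set.mem_setOf_eq, hre]
    exact hmin y hy1
  have hev := hsa.hasEigenvector_of_isMinOn hx0 hmin'
  obtain ⟨hmem, -⟩ := hev
  rw [Module.End.mem_eigenspace_iff] at hmem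
  exact ⟨_, hmem⟩

end Aux

set_option maxHeartbeats 1000000 in
/-- regular values are uniquely v-representable. -/
theorem regular_value_uniquely_vrep [FiniteDimensional ℝ V] [FiniteDimensional ℂ H] [Nontrivial H]
    (ι : V →ₗ[ℝ] (H →ₗ[ℂ] H)) (W : H →ₗ[ℂ] H)
    (hι : ∀ v : V, (ι v).IsSymmetric) (hW : W.IsSymmetric)
    (ρ : Module.Dual ℝ V)
    (hrep : ∃ v : V, ∃ ψ : H, ‖ψ‖ = 1 ∧ expectation (ι v + W) ψ = energy ι W v ∧
      pureDensity ι ψ = ρ)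
    (hreg : ∀ ψ : H, ‖ψ‖ = 1 → pureDensity ι ψ = ρ →
      {d : Module.Dual ℝ V | ∃ φ : H, (inner ℂ φ ψ : ℂ) = 0 ∧ d = derivDensity ι ψ φ}
        = ↑(vectorSpan ℝ {σ : Module.Dual ℝ V | ∃ χ : H, ‖χ‖ = 1 ∧ pureDensity ι χ = σ})) :
    ∀ v v' : V,
      (∃ ψ : H, ‖ψ‖ = 1 ∧ expectation (ι v + W) ψ = energy ι W v ∧ pureDensity ι ψ = ρ) →
      (∃ ψ : H, ‖ψ‖ = 1 ∧ expectation (ι v' + W) ψ = energy ι W v' ∧ pureDensity ι ψ = ρ) →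
      ∃ c : ℝ, ι v - ι v' = c • (LinearMap.id : H →ₗ[ℂ] H) := by
  intro v v' h1 h2
  obtain ⟨ψ, hψn, hψE, hψρ⟩ := h1
  obtain ⟨ψ', hψ'n, hψ'E, hψ'ρ⟩ := h2
  -- densities agree, so `ι w` expectations agree
  have hdens : ∀ w : V, expectation (ι w) ψ' = expectation (ι w) ψ := by
    intro w
    have := congrArg (fun d : Module.Dual ℝ V => d w) (hψ'ρ.trans hψρ.symm)
    exact this
  -- ψ' is also a ground state of ι v + W
  have hEv : expectation (ι v + W) ψ' = energy ι W v := by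
    have e1 : energy ι W v ≤ expectation (ι v + W) ψ' := energy_le ι W v hψ'n
    have e2 : energy ι W v' ≤ expectation (ι v' + W) ψ := energy_le ι W v' hψn
    rw [expectation_add] at e1 e2 hψE hψ'E ⊢
    rw [hdens v] at e1 ⊢
    rw [← hdens v'] at e2
    linarith
  -- minimality of ψ' for both Hamiltonians
  have hminv : ∀ y : H, ‖y‖ = 1 → expectation (ι v + W) ψ' ≤ expectation (ι v + W) y := by
    intro y hy; rw [hEv]; exact energy_le ι W v hy
  have hminv' : ∀ y : H, ‖y‖ = 1 → expectation (ι v' + W) ψ' ≤ expectation (ι v' + W) y := by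
    intro y hy; rw [hψ'E]; exact energy_le ι W v' hy
  obtain ⟨c₁, hc₁⟩ := eigen_of_min ((hι v).add hW) hψ'n hminv
  obtain ⟨c₂, hc₂⟩ := eigen_of_min ((hι v').add hW) hψ'n hminv'
  -- (ι v - ι v') ψ' = (c₁ - c₂) • ψ'
  have heig : (ι v - ι v') ψ' = ((c₁ - c₂ : ℝ) : ℂ) • ψ' := by
    have : (ι v + W) ψ' - (ι v' + W) ψ' = (ι v - ι v') ψ' := by
      simp [LinearMap.add_apply, LinearMap.sub_apply]
    rw [← this, hc₁, hc₂, ← sub_smul]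
    push_cast
    ring_nf
  -- evaluation at v - v' vanishes on the vector span of pure densities
  have hvan : ∀ d : Module.Dual ℝ V,
      d ∈ (vectorSpan ℝ {σ : Module.Dual ℝ V | ∃ χ : H, ‖χ‖ = 1 ∧ pureDensity ι χ = σ} :
        Set (Module.Dual ℝ V)) → d (v - v') = 0 := by
    intro d hd
    rw [← hreg ψ' hψ'n hψ'ρ] at hd
    obtain ⟨φ, hφ, rfl⟩ := hd
    have : ι (v - v') ψ' = ((c₁ - c₂ : ℝ) : ℂ) • ψ' := by
      rw [map_sub]; exact heig
    show 2 * (inner ℂ φ (ι (v - v') ψ') : ℂ).re = 0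
    rw [this, inner_smul_right, hφ, mul_zero]
    simp
  -- all pure densities agree at v - v'
  have hconst : ∀ χ : H, ‖χ‖ = 1 → expectation (ι (v - v')) χ = ρ (v - v') := by
    intro χ hχ
    have hmem1 : pureDensity ι χ ∈
        {σ : Module.Dual ℝ V | ∃ χ' : H, ‖χ'‖ = 1 ∧ pureDensity ι χ' = σ} := ⟨χ, hχ, rfl⟩
    have hmem2 : ρ ∈ {σ : Module.Dual ℝ V | ∃ χ' : H, ‖χ'‖ = 1 ∧ pureDensity ι χ' = σ} :=
      ⟨ψ, hψn, hψρ⟩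
    have hsub := vsub_mem_vectorSpan ℝ hmem1 hmem2
    have := hvan _ hsub
    have h0 : (pureDensity ι χ - ρ) (v - v') = 0 := this
    have : pureDensity ι χ (v - v') - ρ (v - v') = 0 := by
      rw [← h0]; rfl
    have hdef : pureDensity ι χ (v - v') = expectation (ι (v - v')) χ := rfl
    linarith [hdef ▸ this]
  -- conclude ι (v - v') is scalar via polarization
  set c : ℝ := ρ (v - v') with hc
  refine ⟨c, ?_⟩
  set A : H →ₗ[ℂ] H := ι (v - v') with hA
  have hAeq : ι v - ι v' = A := (map_sub ι v v').symm
  rw [hAeq]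
  set B : H →ₗ[ℂ] H := A - c • (LinearMap.id : H →ₗ[ℂ] H) with hB
  have hBsymm : B.IsSymmetric := by
    apply LinearMap.IsSymmetric.sub (hι (v - v'))
    intro x y
    simp only [LinearMap.smul_apply, LinearMap.id_apply]
    rw [RCLike.real_smul_eq_coe_smul (K := ℂ), RCLike.real_smul_eq_coe_smul (K := ℂ),
      inner_smul_left, inner_smul_right]
    simp
  have hBre : ∀ x : H, (inner ℂ x (B x) : ℂ).re = 0 := by
    intro x
    rcases eq_or_ne x 0 with rfl | hx0
    · simp
    · have hnorm : ‖x‖ ≠ 0 := norm_ne_zero_iff.mpr hx0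
      set χ : H := ((‖x‖⁻¹ : ℝ) : ℂ) • x with hχ
      have hχn : ‖χ‖ = 1 := by
        rw [hχ, norm_smul]
        simp [abs_of_nonneg, norm_ne_zero_iff.mpr hx0]
      have hexp := hconst χ hχn
      have hscale : (inner ℂ χ (A χ) : ℂ) = ((‖x‖⁻¹ : ℝ) : ℂ) * (((‖x‖⁻¹ : ℝ) : ℂ) *
          (inner ℂ x (A x) : ℂ)) := by
        rw [hχ, map_smul, inner_smul_left, inner_smul_right]
        simp [Complex.conj_ofReal]
      have hAre : (inner ℂ x (A x) : ℂ).re = ‖x‖ ^ 2 * c := by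
        have : expectation (ι (v - v')) χ = (inner ℂ χ (A χ) : ℂ).re := rfl
        rw [this, hscale] at hexp
        have h1 : (((‖x‖⁻¹ : ℝ) : ℂ) * (((‖x‖⁻¹ : ℝ) : ℂ) * (inner ℂ x (A x) : ℂ))).re
            = ‖x‖⁻¹ * (‖x‖⁻¹ * (inner ℂ x (A x) : ℂ).re) := by
          rw [Complex.re_ofReal_mul, Complex.re_ofReal_mul]
        rw [h1] at hexp
        have h2 : ‖x‖ * ‖x‖⁻¹ = 1 := mul_inv_cancel₀ hnorm
        calc (inner ℂ x (A x) : ℂ).re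
            = (‖x‖ * ‖x‖⁻¹) * ((‖x‖ * ‖x‖⁻¹) * (inner ℂ x (A x) : ℂ).re) := by rw [h2]; ring
          _ = ‖x‖ ^ 2 * (‖x‖⁻¹ * (‖x‖⁻¹ * (inner ℂ x (A x) : ℂ).re)) := by ring
          _ = ‖x‖ ^ 2 * c := by rw [hexp]
      have hid : (inner ℂ x ((c • (LinearMap.id : H →ₗ[ℂ] H)) x) : ℂ).re = ‖x‖ ^ 2 * c := by
        simp only [LinearMap.smul_apply, LinearMap.id_apply]
        rw [RCLike.real_smul_eq_coe_smul (K := ℂ), inner_smul_real_right, Complex.smul_re]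
        have hxx : (inner ℂ x x : ℂ).re = ‖x‖ ^ 2 := by
          have := inner_self_eq_norm_sq (𝕜 := ℂ) x
          rwa [RCLike.re_to_complex] at this
        rw [hxx, smul_eq_mul, mul_comm]
      have : (inner ℂ x (B x) : ℂ) = (inner ℂ x (A x) : ℂ)
          - (inner ℂ x ((c • (LinearMap.id : H →ₗ[ℂ] H)) x) : ℂ) := by
        rw [hB]
        simp [inner_sub_right]
      rw [this, Complex.sub_re, hAre, hid, sub_self]
  have hBzero : ∀ x : H, (inner ℂ x (B x) : ℂ) = 0 := by
    intro x
    have hconjeq : (starRingEnd ℂ) (inner ℂ x (B x) : ℂ) = (inner ℂ x (B x) : ℂ) := by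
      rw [inner_conj_symm]
      exact hBsymm x x
    have hreal : ((inner ℂ x (B x) : ℂ).re : ℂ) = (inner ℂ x (B x) : ℂ) :=
      Complex.conj_eq_iff_re.mp hconjeq
    rw [← hreal, hBre x, Complex.ofReal_zero]
  have : B = 0 := by
    rw [← inner_map_self_eq_zero]
    intro x
    rw [← inner_conj_symm, hBzero x, map_zero]
  rw [← sub_eq_zero]
  exact this

end
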